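/- Let L, ℓ : ℝⁿ → ℝ be smooth, L strongly convex with minimizer θ*, and for ε near 0 define θ(ε) as the unique minimizer of L + ε·ℓ. Then θ is differentiable at 0 with derivative θ'(0) = -H⁻¹ ∇ℓ(θ*), where H = ∇²L(θ*). -/

import Mathlib

open RealInnerProductSpace Filter

lemma aux_side {E : Type*} [NormedAddCommGroup E] (L ℓ : E → ℝ)
    (θstar : E) (θ : ℝ → E) (m c : ℝ) (hm : 0 < m) (hc : 0 < c)
    (hev : ∀ᶠ ε in nhdsWithin (0:ℝ) (Set.Ioi 0),
      m / 2 * ‖θ ε - θstar‖ ^ 2 ≤ ε * (ℓ θstar - ℓ (θ ε)) ∧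
      L (θ ε) ≤ L θstar + ε * (ℓ θstar - ℓ (θ ε)) ∧
      (∀ y, L (θ ε) + ε * ℓ (θ ε) ≤ L y + ε * ℓ y))
    (hfreq : ∃ᶠ ε in nhdsWithin (0:ℝ) (Set.Ioi 0), c ≤ ‖θ ε - θstar‖) : False := by
  -- pick a fixed ε' > 0 with the minimizer property
  have hpos : ∀ᶠ ε in nhdsWithin (0:ℝ) (Set.Ioi 0), 0 < ε :=
    eventually_mem_nhdsWithin
  obtain ⟨ε', hε'⟩ := (hev.and hpos).exists
  obtain ⟨⟨h1', h2', h3'⟩, hε'pos⟩ := hε'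
  set B : ℝ := L (θ ε') + ε' * ℓ (θ ε') with hB
  clear_value B
  set R : ℝ := L θstar + ε' * ℓ θstar - B with hR
  clear_value R
  set κ : ℝ := (ε' / 2 * (m / 2 * c ^ 2)) / (max R 1) with hκ
  clear_value κ
  have hκpos : 0 < κ := by
    rw [hκ]
    exact div_pos (by positivity) (lt_of_lt_of_le one_pos (le_max_right _ _))
  have hsmall : ∀ᶠ ε in nhdsWithin (0:ℝ) (Set.Ioi 0), ε < min (ε' / 2) κ := by
    apply eventually_nhdsWithin_of_eventually_nhds
    exact eventually_lt_nhds (lt_min (by linarith) hκpos)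
  obtain ⟨ε, hcr, ⟨⟨h1, h2, _⟩, hεpos⟩, hεsmall⟩ :=
    (hfreq.and_eventually ((hev.and hpos).and hsmall)).exists
  have hεκ : ε < κ := lt_of_lt_of_le hεsmall (min_le_right _ _)
  have hεhalf : ε < ε' / 2 := lt_of_lt_of_le hεsmall (min_le_left _ _)
  set r : ℝ := ‖θ ε - θstar‖ with hr
  clear_value r
  set D : ℝ := ℓ θstar - ℓ (θ ε) with hD
  clear_value D
  -- ε * D ≥ m/2 * c^2
  have hεD : m / 2 * c ^ 2 ≤ ε * D := by
    refine le_trans ?_ h1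
    have : c ^ 2 ≤ r ^ 2 := by nlinarith [norm_nonneg (θ ε - θstar)]
    nlinarith
  -- B ≤ L θstar + ε' ℓ θstar - (ε' - ε) D
  have hBle : B ≤ L θstar + ε' * ℓ θstar - (ε' - ε) * D := by
    have := h3' (θ ε)
    -- h3' : ∀ y, L (θ ε') + ε' * ℓ (θ ε') ≤ L y + ε' * ℓ y
    have hB2 : B ≤ L (θ ε) + ε' * ℓ (θ ε) := h3' (θ ε)
    nlinarith [h2]
  -- contradiction
  have hRD : (ε' - ε) * D ≤ R := by rw [hR]; linarith
  have hDpos : 0 < D := by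
    rcases lt_or_ge 0 D with h | h
    · exact h
    · have hle : ε * D ≤ 0 := mul_nonpos_of_nonneg_of_nonpos hεpos.le h
      have : (0:ℝ) < m / 2 * c ^ 2 := by positivity
      linarith
  have hA : ε' / 2 * D ≤ R := by
    nlinarith [mul_pos (show (0:ℝ) < ε' / 2 - ε by linarith) hDpos]
  have h5 : ε' / 2 * (m / 2 * c ^ 2) ≤ ε * R := by
    nlinarith [mul_le_mul_of_nonneg_left hεD (show (0:ℝ) ≤ ε' / 2 by linarith),
      mul_le_mul_of_nonneg_left hA hεpos.le]
  have h6 : ε * R ≤ ε * max R 1 := by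
    apply mul_le_mul_of_nonneg_left (le_max_left _ _) (le_of_lt hεpos)
  have h7 : ε * max R 1 < κ * max R 1 :=
    mul_lt_mul_of_pos_right hεκ (lt_of_lt_of_le one_pos (le_max_right _ _))
  have h8 : κ * max R 1 = ε' / 2 * (m / 2 * c ^ 2) := by
    rw [hκ, div_mul_cancel₀]
    exact ne_of_gt (lt_of_lt_of_le one_pos (le_max_right _ _))
  linarith

/-- Influence-function derivative: if `L, ℓ : ℝⁿ → ℝ` are C², `L` is strongly convex with
minimizer `θ*`, and for `ε` near `0` the curve `θ(ε)` is the unique minimizer of `L + ε·ℓ`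
(with `θ(0) = θ*`), then `θ` is differentiable at `0` with derivative
`θ'(0) = -H⁻¹ ∇ℓ(θ*)`, where `H = ∇²L(θ*)` (given via its continuous linear inverse). -/
theorem stmt_2 (n : ℕ) (L ℓ : EuclideanSpace ℝ (Fin n) → ℝ)
    (θstar : EuclideanSpace ℝ (Fin n)) (θ : ℝ → EuclideanSpace ℝ (Fin n))
    (hL : ContDiff ℝ 2 L) (hℓ : ContDiff ℝ 2 ℓ) (m : ℝ) (hm : 0 < m)
    (hconv : ∀ x y : EuclideanSpace ℝ (Fin n),
      L x + ⟪gradient L x, y - x⟫ + (m / 2) * ‖y - x‖ ^ 2 ≤ L y)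
    (hmin : ∀ y, L θstar ≤ L y) (hθ0 : θ 0 = θstar)
    (hθmin : ∀ᶠ ε in nhds (0 : ℝ),
      (∀ y, L (θ ε) + ε * ℓ (θ ε) ≤ L y + ε * ℓ y) ∧
      (∀ y, (∀ y', L y + ε * ℓ y ≤ L y' + ε * ℓ y') → y = θ ε))
    (H Hinv : EuclideanSpace ℝ (Fin n) →L[ℝ] EuclideanSpace ℝ (Fin n))
    (hH : H = fderiv ℝ (gradient L) θstar)
    (hHinv : (∀ v, Hinv (H v) = v) ∧ (∀ v, H (Hinv v) = v)) :
    HasDerivAt θ (-(Hinv (gradient ℓ θstar))) 0 := by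
  have hLd : Differentiable ℝ L := hL.differentiable (by norm_num)
  have hℓd : Differentiable ℝ ℓ := hℓ.differentiable (by norm_num)
  -- gradient L θstar = 0
  have gradL0 : gradient L θstar = 0 := by
    have hloc : IsLocalMin L θstar := Filter.Eventually.of_forall fun y => hmin y
    have h0 : fderiv ℝ L θstar = 0 := hloc.fderiv_eq_zero
    have h2 := ((hLd θstar).hasGradientAt).hasFDerivAt.fderiv
    rw [h0] at h2
    have := congrArg (InnerProductSpace.toDual ℝ (EuclideanSpace ℝ (Fin n))).symm h2
    simpa [gradient] using this.symm
  -- strong convexity, first form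
  have hsc1 : ∀ x, L θstar + m / 2 * ‖x - θstar‖ ^ 2 ≤ L x := by
    intro x
    have := hconv θstar x
    rw [gradL0, inner_zero_left] at this
    linarith
  -- stationarity
  have hstat : ∀ᶠ ε in nhds (0 : ℝ),
      gradient L (θ ε) = -(ε • gradient ℓ (θ ε)) := by
    filter_upwards [hθmin] with ε hε
    have hloc : IsLocalMin (fun x => L x + ε * ℓ x) (θ ε) :=
      Filter.Eventually.of_forall fun y => hε.1 y
    have h0 : fderiv ℝ (fun x => L x + ε * ℓ x) (θ ε) = 0 := hloc.fderiv_eq_zero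
    have hfd : HasFDerivAt (fun x => L x + ε * ℓ x)
        ((InnerProductSpace.toDual ℝ (EuclideanSpace ℝ (Fin n))) (gradient L (θ ε) + ε • gradient ℓ (θ ε))) (θ ε) := by
      have h1 := ((hLd (θ ε)).hasGradientAt).hasFDerivAt
      have h2 := ((hℓd (θ ε)).hasGradientAt).hasFDerivAt
      have := h1.add (h2.const_mul ε)
      simp [map_add, map_smul] at this ⊢
      exact this
    have h3 := hfd.fderiv
    rw [h0] at h3
    have h4 := congrArg (InnerProductSpace.toDual ℝ (EuclideanSpace ℝ (Fin n))).symm h3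
    simp only [LinearIsometryEquiv.symm_apply_apply, map_zero] at h4
    have h5 : gradient L (θ ε) + ε • gradient ℓ (θ ε) = 0 := by
      symm; simpa using h4
    linear_combination (norm := module) h5
  -- core eventual inequalities
  have hcore : ∀ᶠ ε in nhds (0 : ℝ),
      m / 2 * ‖θ ε - θstar‖ ^ 2 ≤ ε * (ℓ θstar - ℓ (θ ε)) ∧
      L (θ ε) ≤ L θstar + ε * (ℓ θstar - ℓ (θ ε)) ∧
      (∀ y, L (θ ε) + ε * ℓ (θ ε) ≤ L y + ε * ℓ y) := by
    filter_upwards [hθmin] with ε hε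
    have hA := hε.1 θstar
    have hB := hsc1 (θ ε)
    exact ⟨by linarith, by linarith, hε.1⟩
  -- continuity of θ at 0
  have hcont : Filter.Tendsto θ (nhds 0) (nhds θstar) := by
    rw [Metric.tendsto_nhds]
    by_contra hcon
    push_neg at hcon
    obtain ⟨c, hc, hfr⟩ := hcon
    simp only [← not_lt] at hfr
    have hfr' : ∃ᶠ ε in nhds (0 : ℝ), c ≤ ‖θ ε - θstar‖ ∧ ε ≠ 0 := by
      refine hfr.mono fun ε hε => ?_
      have h1 : c ≤ ‖θ ε - θstar‖ := by
        rw [dist_eq_norm] at hε; linarith [not_lt.mp hε]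
      refine ⟨h1, fun h0 => ?_⟩
      rw [h0, hθ0] at h1
      simp at h1
      linarith
    have hfr2 : ∃ᶠ ε in nhdsWithin (0 : ℝ) {(0:ℝ)}ᶜ, c ≤ ‖θ ε - θstar‖ := by
      rw [frequently_nhdsWithin_iff]
      exact hfr'.mono fun ε hε => ⟨hε.1, hε.2⟩
    rw [← nhdsLT_sup_nhdsGT, Filter.frequently_sup] at hfr2
    rcases hfr2 with hleft | hright
    · -- left side: use reflected data
      have hnegt : Filter.Tendsto (fun ε : ℝ => -ε) (nhdsWithin (0:ℝ) (Set.Ioi 0)) (nhds 0) := by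
        have h := (continuous_neg.tendsto (0:ℝ)).mono_left
          (nhdsWithin_le_nhds (s := Set.Ioi (0:ℝ)) (a := (0:ℝ)))
        simpa using h
      have hev' : ∀ᶠ ε in nhdsWithin (0:ℝ) (Set.Ioi 0),
          m / 2 * ‖θ (-ε) - θstar‖ ^ 2 ≤ ε * ((-ℓ θstar) - (-ℓ (θ (-ε)))) ∧
          L (θ (-ε)) ≤ L θstar + ε * ((-ℓ θstar) - (-ℓ (θ (-ε)))) ∧
          (∀ y, L (θ (-ε)) + ε * (-ℓ (θ (-ε))) ≤ L y + ε * (-ℓ y)) := by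
        filter_upwards [hnegt.eventually hcore] with ε hε
        obtain ⟨h1, h2, h3⟩ := hε
        refine ⟨by linarith, by linarith, fun y => ?_⟩
        have := h3 y
        linarith
      have hfreq' : ∃ᶠ ε in nhdsWithin (0:ℝ) (Set.Ioi 0), c ≤ ‖θ (-ε) - θstar‖ := by
        have hmapeq : Filter.map (fun ε : ℝ => -ε) (nhdsWithin (0:ℝ) (Set.Ioi 0))
            = nhdsWithin (0:ℝ) (Set.Iio 0) := by
          refine le_antisymm ?_ ?_
          · have := tendsto_neg_nhdsGT_neg (a := (0:ℝ))
            simpa using this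
          · have h2 : Filter.Tendsto (fun ε : ℝ => -ε) (nhdsWithin (0:ℝ) (Set.Iio 0))
                (nhdsWithin (0:ℝ) (Set.Ioi 0)) := by
              simpa using tendsto_neg_nhdsLT_neg (a := (0:ℝ))
            calc nhdsWithin (0:ℝ) (Set.Iio 0)
                = Filter.map (fun ε : ℝ => -ε) (Filter.map (fun ε : ℝ => -ε)
                    (nhdsWithin (0:ℝ) (Set.Iio 0))) := by
                  rw [Filter.map_map]; simp [Function.comp_def]
              _ ≤ Filter.map (fun ε : ℝ => -ε) (nhdsWithin (0:ℝ) (Set.Ioi 0)) :=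
                  Filter.map_mono h2
        rw [← hmapeq, Filter.frequently_map] at hleft
        exact hleft
      exact aux_side L (fun x => -ℓ x) θstar (fun ε => θ (-ε)) m c hm hc hev' hfreq'
    · exact aux_side L ℓ θstar θ m c hm hc
        (hcore.filter_mono nhdsWithin_le_nhds) hright
  -- gradient L is C¹ and its derivative at θstar is H
  have hgrad_eq : gradient L = fun x => (InnerProductSpace.toDual ℝ (EuclideanSpace ℝ (Fin n))).symm (fderiv ℝ L x) := by
    funext x
    rw [((hLd x).hasGradientAt).hasFDerivAt.fderiv, LinearIsometryEquiv.symm_apply_apply]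
  have hcd : ContDiff ℝ 1 (gradient L) := by
    rw [hgrad_eq]
    exact ((InnerProductSpace.toDual ℝ (EuclideanSpace ℝ (Fin n))).symm.toContinuousLinearEquiv.toContinuousLinearMap
      |>.contDiff).comp (hL.fderiv_right (by norm_num))
  have h_fder : HasFDerivAt (gradient L) H θstar := by
    rw [hH]
    exact ((hcd.differentiable one_ne_zero) θstar).hasFDerivAt
  -- gradient ℓ is continuous
  have hgradℓ_eq : gradient ℓ = fun x => (InnerProductSpace.toDual ℝ (EuclideanSpace ℝ (Fin n))).symm (fderiv ℝ ℓ x) := by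
    funext x
    rw [((hℓd x).hasGradientAt).hasFDerivAt.fderiv, LinearIsometryEquiv.symm_apply_apply]
  have hglc : Continuous (gradient ℓ) := by
    rw [hgradℓ_eq]
    exact (InnerProductSpace.toDual ℝ (EuclideanSpace ℝ (Fin n))).symm.continuous.comp
      ((hℓ.fderiv_right (m := 1) (by norm_num)).continuous)
  have hgltend : Filter.Tendsto (fun ε => gradient ℓ (θ ε)) (nhds 0) (nhds (gradient ℓ θstar)) :=
    (hglc.tendsto θstar).comp hcont
  set C : ℝ := ‖gradient ℓ θstar‖ + 1 with hC
  have hCpos : 0 < C := by positivity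
  have hCb : ∀ᶠ ε in nhds (0 : ℝ), ‖gradient ℓ (θ ε)‖ ≤ C :=
    (hgltend.norm.eventually (eventually_lt_nhds (lt_add_one _))).mono fun ε h => le_of_lt h
  -- ‖θ ε - θstar‖ ≤ C/m * |ε|
  have hbound : ∀ᶠ ε in nhds (0 : ℝ), ‖θ ε - θstar‖ ≤ C / m * ‖ε‖ := by
    filter_upwards [hstat, hCb] with ε h1 h2
    set r : ℝ := ‖θ ε - θstar‖ with hr
    have hr0 : 0 ≤ r := norm_nonneg _
    have hsc2 := hconv (θ ε) θstar
    have hsc1' := hsc1 (θ ε)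
    rw [show θstar - θ ε = -(θ ε - θstar) by abel, inner_neg_right, norm_neg] at hsc2
    have hpair : m * r ^ 2 ≤ ⟪gradient L (θ ε), θ ε - θstar⟫ := by
      rw [← hr] at hsc2 hsc1'
      linarith
    rw [h1, inner_neg_left, real_inner_smul_left] at hpair
    have hcs : |⟪gradient ℓ (θ ε), θ ε - θstar⟫| ≤ ‖gradient ℓ (θ ε)‖ * r :=
      abs_real_inner_le_norm _ _
    have hp2 : m * r ^ 2 ≤ |ε| * (C * r) := by
      have : -(ε * ⟪gradient ℓ (θ ε), θ ε - θstar⟫) ≤ |ε| * (C * r) := by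
        have h3 : |ε * ⟪gradient ℓ (θ ε), θ ε - θstar⟫| ≤ |ε| * (C * r) := by
          rw [abs_mul]
          refine mul_le_mul_of_nonneg_left ?_ (abs_nonneg _)
          exact le_trans hcs (mul_le_mul_of_nonneg_right h2 hr0)
        linarith [neg_abs_le (ε * ⟪gradient ℓ (θ ε), θ ε - θstar⟫)]
      linarith
    rcases eq_or_lt_of_le hr0 with h0 | h0
    · rw [← h0]; positivity
    · have h4 : m * r * r ≤ C * |ε| * r := by
        calc m * r * r = m * r ^ 2 := by ring
          _ ≤ |ε| * (C * r) := hp2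
          _ = C * |ε| * r := by ring
      have h5 := le_of_mul_le_mul_right h4 h0
      rw [Real.norm_eq_abs, div_mul_eq_mul_div, le_div_iff₀ hm]
      linarith
  have hBigO : (fun ε => θ ε - θstar) =O[nhds (0:ℝ)] (fun ε => ε) := by
    rw [Asymptotics.isBigO_iff]
    exact ⟨C / m, hbound⟩
  -- little-o computation
  have ho1 : (fun ε => gradient L (θ ε) - H (θ ε - θstar)) =o[nhds (0:ℝ)]
      (fun ε => θ ε - θstar) := by
    refine (h_fder.isLittleO.comp_tendsto hcont).congr'
      (Filter.EventuallyEq.of_eq (funext fun ε => ?_)) Filter.EventuallyEq.rfl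
    simp only [Function.comp_apply, gradL0, sub_zero]
  have ho2 := ho1.trans_isBigO hBigO
  have ho2' : (fun ε => -(ε • gradient ℓ (θ ε)) - H (θ ε - θstar)) =o[nhds (0:ℝ)]
      (fun ε => ε) := by
    refine ho2.congr' ?_ (Filter.EventuallyEq.rfl)
    filter_upwards [hstat] with ε h1
    rw [h1]
  have ho3 : (fun ε => ε • (gradient ℓ (θ ε) - gradient ℓ θstar)) =o[nhds (0:ℝ)]
      (fun ε => ε) := by
    have ht : Filter.Tendsto (fun ε => gradient ℓ (θ ε) - gradient ℓ θstar) (nhds 0)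
        (nhds 0) := by
      rw [← sub_self (gradient ℓ θstar)]
      exact hgltend.sub tendsto_const_nhds
    have := (Asymptotics.isBigO_refl (fun ε : ℝ => ε) (nhds 0)).smul_isLittleO
      ((Asymptotics.isLittleO_one_iff ℝ).2 ht)
    simpa using this
  have ho4 : (fun ε => -(ε • gradient ℓ θstar) - H (θ ε - θstar)) =o[nhds (0:ℝ)]
      (fun ε => ε) := by
    have := ho2'.add ho3
    refine this.congr' (Filter.EventuallyEq.of_eq (funext fun ε => ?_)) Filter.EventuallyEq.rfl
    simp [smul_sub]
    try abel
  have ho5 : (fun ε => -(ε • Hinv (gradient ℓ θstar)) - (θ ε - θstar)) =o[nhds (0:ℝ)]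
      (fun ε => ε) := by
    have hcomp := (Hinv.isBigO_comp
      (fun ε => -(ε • gradient ℓ θstar) - H (θ ε - θstar)) (nhds (0:ℝ))).trans_isLittleO ho4
    refine hcomp.congr' (Filter.EventuallyEq.of_eq (funext fun ε => ?_)) Filter.EventuallyEq.rfl
    simp [map_sub, map_smul, map_neg, hHinv.1]
  rw [hasDerivAt_iff_isLittleO]
  have := ho5.neg_left
  refine this.congr' (Filter.EventuallyEq.of_eq (funext fun ε => ?_))
    (Filter.EventuallyEq.of_eq (funext fun ε => by simp))
  simp [hθ0, smul_neg]
  try abel
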